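/- arXiv:2208.07614 — 3 statements merged into one kernel-verified Lean document; each statement's English description precedes it below -/
import Mathlib

section
/- Inverse moment bound for a binomial proportion (appendix Lemma 'Inequality on π̂'). For every n ≥ 1 and every α ∈ (0, 1/2): E[1{π̂ > 0}/π̂] ≤ (1 + C_{α,π} n^{−α})/π, where C_{α,π} := 1 + 2 (16/(π²(1 − 2α)))^{2/(1 − 2α)}. -/
open MeasureTheory ProbabilityTheory Filter

lemma aux_exp_neg_quad {s : ℝ} (h0 : 0 ≤ s) (h1 : s ≤ 1) : Real.exp (-s) ≤ 1 - s + s^2/2 := by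
  have hb := Real.exp_bound (x := -s) (by rw [abs_neg, abs_of_nonneg h0]; linarith) (n := 4)
    (by norm_num)
  rw [abs_neg, abs_of_nonneg h0] at hb
  have hsum : ∑ m ∈ Finset.range 4, (-s) ^ m / m.factorial = 1 - s + s^2/2 - s^3/6 := by
    simp [Finset.sum_range_succ, Nat.factorial]; ring
  rw [hsum] at hb
  have h2 := (abs_sub_le_iff.1 hb).1
  norm_num [Nat.factorial] at h2
  have hss : s^4 ≤ s^3 := by
    calc s^4 = s^3 * s := by ring
    _ ≤ s^3 * 1 := by gcongr
    _ = s^3 := by ring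
  nlinarith [pow_nonneg h0 3]

lemma aux_exp_neg_rpow {x k : ℝ} (hx : 0 < x) (hk : 0 < k) : Real.exp (-x) ≤ (k/x) ^ k := by
  have h1 : x/k ≤ Real.exp (x/k) :=
    (le_add_of_nonneg_right zero_le_one).trans (Real.add_one_le_exp _)
  have h2 : (x/k) ^ k ≤ Real.exp (x/k) ^ k := Real.rpow_le_rpow (by positivity) h1 hk.le
  rw [← Real.exp_mul, div_mul_cancel₀ _ hk.ne'] at h2
  have h3 : (0:ℝ) < (x/k) ^ k := Real.rpow_pos_of_pos (by positivity) _
  rw [Real.exp_neg, show (k/x)^k = ((x/k)^k)⁻¹ by rw [← Real.inv_rpow (by positivity), inv_div]]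
  exact inv_anti₀ h3 h2

set_option maxHeartbeats 1000000 in
/-- **Inverse moment bound for a binomial proportion** (appendix Lemma "Inequality on π̂"):
if `π̂ = B_n/n` with `B_n = Σ_{i<n} A_i` a sum of `n` i.i.d. Bernoulli(`π`) variables
(so that `B_n` is binomial with parameters `n` and `π`), then for every `n ≥ 1` and every
`α ∈ (0, 1/2)`,
`E[1{π̂ > 0}/π̂] ≤ (1 + C_{α,π} n^{−α})/π` where
`C_{α,π} = 1 + 2(16/(π²(1 − 2α)))^{2/(1 − 2α)}`. -/
theorem binomial_inverse_moment_bound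
    {Ω : Type*} [MeasurableSpace Ω] (μ : Measure Ω) [IsProbabilityMeasure μ]
    (A : ℕ → Ω → ℝ) (π : ℝ) (hπ0 : 0 < π) (hπ1 : π < 1)
    (measA : ∀ i, Measurable (A i))
    (A01 : ∀ i ω, A i ω = 0 ∨ A i ω = 1)
    (indep : iIndepFun (β := fun _ => ℝ) A μ)
    (pA : ∀ i, μ {ω | A i ω = 1} = ENNReal.ofReal π)
    (n : ℕ) (hn : 1 ≤ n) (α : ℝ) (hα0 : 0 < α) (hα1 : α < 1 / 2) :
    (∫ ω, (if 0 < (∑ i ∈ Finset.range n, A i ω) / n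
        then ((∑ i ∈ Finset.range n, A i ω) / n)⁻¹ else 0) ∂μ)
      ≤ (1 + (1 + 2 * (16 / (π ^ 2 * (1 - 2 * α))) ^ (2 / (1 - 2 * α)))
          * (n : ℝ) ^ (-α)) / π := by
  have hn0 : (0:ℝ) < n := by exact_mod_cast hn
  have hn1 : (1:ℝ) ≤ n := by exact_mod_cast hn
  have h2α : 0 < 1 - 2*α := by linarith
  have hna_pos : 0 < (n:ℝ)^(-α) := Real.rpow_pos_of_pos hn0 _
  have hna_le1 : (n:ℝ)^(-α) ≤ 1 := Real.rpow_le_one_of_one_le_of_nonpos hn1 (by linarith)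
  set ε : ℝ := (n:ℝ) ^ (-α) / 2 with hε_def
  have hε0 : 0 < ε := by positivity
  have hεhalf : ε ≤ 1/2 := by rw [hε_def]; linarith only [hna_le1]
  set B : Ω → ℝ := fun ω => ∑ i ∈ Finset.range n, A i ω with hB_def
  have measB : Measurable B := Finset.measurable_sum _ (fun i _ => measA i)
  have hA0 : ∀ i ω, 0 ≤ A i ω := by
    intro i ω; rcases A01 i ω with h | h <;> rw [h] <;> norm_num
  have hB0 : ∀ ω, 0 ≤ B ω := fun ω => Finset.sum_nonneg fun i _ => hA0 i ω
  have hB1 : ∀ ω, 0 < B ω → 1 ≤ B ω := by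
    intro ω h
    obtain ⟨i, hi, hAi⟩ : ∃ i ∈ Finset.range n, A i ω ≠ 0 := by
      by_contra hc
      push_neg at hc
      have : B ω = 0 := Finset.sum_eq_zero hc
      linarith only [h, this]
    have h1 : A i ω = 1 := (A01 i ω).resolve_left hAi
    calc (1:ℝ) = A i ω := h1.symm
    _ ≤ B ω := Finset.single_le_sum (f := fun j => A j ω) (fun j _ => hA0 j ω) hi
  set t₀ : ℝ := n * π * (1 - ε) with ht₀_def
  have h1ε : (0:ℝ) < 1 - ε := by linarith
  have ht₀pos : 0 < t₀ := by positivity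
  set c₁ : ℝ := (1 + (n:ℝ)^(-α)) / π with hc₁_def
  have hc₁0 : 0 ≤ c₁ := by positivity
  set g : Ω → ℝ := fun ω => if 0 < B ω / n then (B ω / n)⁻¹ else 0 with hg_def
  have hgoal_eq : (∫ ω, (if 0 < (∑ i ∈ Finset.range n, A i ω) / n
      then ((∑ i ∈ Finset.range n, A i ω) / n)⁻¹ else 0) ∂μ) = ∫ ω, g ω ∂μ := rfl
  rw [hgoal_eq]
  -- bounds on g
  have hg_bnd : ∀ ω, 0 ≤ g ω ∧ g ω ≤ n := by
    intro ω
    rw [hg_def]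
    simp only
    split_ifs with hcond
    · have hBpos : 0 < B ω := by
        have := mul_pos hcond hn0
        rwa [div_mul_cancel₀ _ hn0.ne'] at this
      have h1 : 1 ≤ B ω := hB1 ω hBpos
      constructor
      · positivity
      · rw [inv_div, div_le_iff₀ hBpos]
        exact le_mul_of_one_le_right hn0.le h1
    · exact ⟨le_refl 0, hn0.le⟩
  -- pointwise bound
  set bad : Set Ω := {ω | B ω < t₀} with hbad_def
  have hbad_meas : MeasurableSet bad := measurableSet_lt measB measurable_const
  have hpt : ∀ ω, g ω ≤ c₁ + Set.indicator bad (fun _ => (n:ℝ)) ω := by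
    intro ω
    by_cases hω : ω ∈ bad
    · rw [Set.indicator_of_mem hω]
      have h := hg_bnd ω
      linarith only [h.2, hc₁0]
    · rw [Set.indicator_of_notMem hω, add_zero]
      have hω' : t₀ ≤ B ω := not_lt.1 hω
      have hBpos : 0 < B ω := lt_of_lt_of_le ht₀pos hω'
      have hcond : 0 < B ω / n := div_pos hBpos hn0
      rw [hg_def]
      simp only [if_pos hcond]
      have hπε : 0 < π * (1 - ε) := by positivity
      have h1 : π * (1 - ε) ≤ B ω / n := by
        rw [le_div_iff₀ hn0]
        calc π * (1-ε) * n = t₀ := by rw [ht₀_def]; ring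
        _ ≤ B ω := hω'
      have h2 : (B ω / n)⁻¹ ≤ (π * (1-ε))⁻¹ := inv_anti₀ hπε h1
      have h3 : (π * (1-ε))⁻¹ ≤ c₁ := by
        rw [hc₁_def, inv_eq_one_div, div_le_div_iff₀ hπε hπ0,
          show (n:ℝ)^(-α) = 2*ε by rw [hε_def]; ring]
        linarith only [mul_nonneg (mul_nonneg hπ0.le hε0.le)
          (by linarith only [hεhalf] : (0:ℝ) ≤ 1 - 2*ε)]
      linarith only [h2, h3]
  -- integrability
  have hgmeas : Measurable g :=
    Measurable.ite (measurableSet_lt measurable_const (measB.div_const _))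
      (measB.div_const _).inv measurable_const
  have hgint : Integrable g μ := by
    refine Integrable.mono' (integrable_const (n:ℝ)) hgmeas.aestronglyMeasurable
      (ae_of_all _ fun ω => ?_)
    rw [Real.norm_eq_abs, abs_of_nonneg (hg_bnd ω).1]
    exact (hg_bnd ω).2
  have hindint : Integrable (fun ω => c₁ + Set.indicator bad (fun _ => (n:ℝ)) ω) μ :=
    (integrable_const c₁).add ((integrable_const (n:ℝ)).indicator hbad_meas)
  have hmono : ∫ ω, g ω ∂μ ≤ ∫ ω, (c₁ + Set.indicator bad (fun _ => (n:ℝ)) ω) ∂μ :=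
    integral_mono hgint hindint hpt
  have hIndVal : ∫ ω, (c₁ + Set.indicator bad (fun _ => (n:ℝ)) ω) ∂μ
      = c₁ + (μ bad).toReal * n := by
    rw [integral_add (integrable_const _) ((integrable_const (n:ℝ)).indicator hbad_meas),
      integral_const, probReal_univ, one_smul,
      integral_indicator_const _ hbad_meas, smul_eq_mul, measureReal_def]
  -- Chernoff
  have hint_exp : Integrable (fun ω => Real.exp (-ε * B ω)) μ := by
    refine Integrable.mono' (integrable_const 1)
      ((measB.const_mul (-ε)).exp).aestronglyMeasurable (ae_of_all _ fun ω => ?_)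
    rw [Real.norm_eq_abs, abs_of_nonneg (Real.exp_pos _).le]
    rw [show (1:ℝ) = Real.exp 0 by simp]
    apply Real.exp_le_exp.2
    exact mul_nonpos_iff.2 (Or.inr ⟨neg_nonpos.2 hε0.le, hB0 ω⟩)
  have hmarkov := measure_le_le_exp_mul_mgf (μ := μ) (X := B) (t := -ε) t₀
    (by linarith) hint_exp
  rw [neg_neg] at hmarkov
  -- mgf computation
  have hAint : ∀ i, Integrable (A i) μ := by
    intro i
    refine Integrable.mono' (integrable_const 1) (measA i).aestronglyMeasurable
      (ae_of_all _ fun ω => ?_)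
    rw [Real.norm_eq_abs, abs_of_nonneg (hA0 i ω)]
    rcases A01 i ω with h | h <;> rw [h] <;> norm_num
  have hEA : ∀ i, ∫ ω, A i ω ∂μ = π := by
    intro i
    have hset : MeasurableSet {ω | A i ω = 1} := by
      have := (measA i) (measurableSet_singleton (1:ℝ))
      convert this using 1
      rfl
    have hind : (fun ω => A i ω) = Set.indicator {ω | A i ω = 1} (fun _ => (1:ℝ)) := by
      funext ω
      rcases A01 i ω with h | h <;> simp [Set.indicator, h]
    rw [hind, integral_indicator_const _ hset, measureReal_def, pA i, smul_eq_mul, mul_one,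
      ENNReal.toReal_ofReal hπ0.le]
  have hmgfA : ∀ i, mgf (A i) μ (-ε) = 1 + π * (Real.exp (-ε) - 1) := by
    intro i
    have hfun : (fun ω => Real.exp (-ε * A i ω))
        = fun ω => 1 + (Real.exp (-ε) - 1) * A i ω := by
      funext ω
      rcases A01 i ω with h | h <;> rw [h] <;> simp <;> ring
    rw [mgf, hfun]
    rw [integral_add (integrable_const 1) ((hAint i).const_mul _), integral_const,
      probReal_univ, one_smul, MeasureTheory.integral_const_mul, hEA i]
    ring
  have hBsum : B = ∑ i ∈ Finset.range n, A i := by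
    funext ω
    rw [Finset.sum_apply]
  have hmgfB : mgf B μ (-ε) = (1 + π * (Real.exp (-ε) - 1))^n := by
    rw [hBsum, indep.mgf_sum measA, Finset.prod_congr rfl (fun i _ => hmgfA i),
      Finset.prod_const, Finset.card_range]
  -- bound the mgf
  have hbase0 : (0:ℝ) ≤ 1 + π * (Real.exp (-ε) - 1) := by
    linarith only [mul_pos hπ0 (Real.exp_pos (-ε)), hπ1]
  have hbase_le : 1 + π * (Real.exp (-ε) - 1) ≤ Real.exp (π * (Real.exp (-ε) - 1)) := by
    have := Real.add_one_le_exp (π * (Real.exp (-ε) - 1))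
    linarith only [this]
  have hq : Real.exp (-ε) ≤ 1 - ε + ε^2/2 := aux_exp_neg_quad hε0.le (by linarith)
  have hmgf_le : mgf B μ (-ε) ≤ Real.exp ((n:ℝ) * (π * (Real.exp (-ε) - 1))) := by
    rw [hmgfB, Real.exp_nat_mul]
    exact pow_le_pow_left₀ hbase0 hbase_le n
  have hchern : (μ {ω | B ω ≤ t₀}).toReal ≤ Real.exp (-((n:ℝ) * π * ε^2/2)) := by
    refine hmarkov.trans ?_
    calc Real.exp (ε * t₀) * mgf B μ (-ε)
        ≤ Real.exp (ε * t₀) * Real.exp ((n:ℝ) * (π * (Real.exp (-ε) - 1))) := by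
          exact mul_le_mul_of_nonneg_left hmgf_le (Real.exp_pos _).le
    _ = Real.exp (ε * t₀ + (n:ℝ) * (π * (Real.exp (-ε) - 1))) := (Real.exp_add _ _).symm
    _ ≤ Real.exp (-((n:ℝ) * π * ε^2/2)) := by
        apply Real.exp_le_exp.2
        have h6 : (0:ℝ) ≤ (n:ℝ) * π := by positivity
        have h7 := mul_le_mul_of_nonneg_left (show Real.exp (-ε) - 1 ≤ -ε + ε^2/2 by linarith) h6
        rw [ht₀_def]
        linarith only [h7]
  have hbadchern : (μ bad).toReal ≤ Real.exp (-((n:ℝ) * π * ε^2/2)) := by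
    refine le_trans ?_ hchern
    have hsub : bad ⊆ {ω | B ω ≤ t₀} := fun ω h => le_of_lt (show B ω < t₀ from h)
    exact ENNReal.toReal_mono (measure_ne_top μ _) (measure_mono hsub)
  -- the tail quantity
  set k : ℝ := 2 / (1 - 2*α) with hk_def
  have hk0 : 0 < k := by positivity
  set x : ℝ := (n:ℝ) * π * ε^2/2 with hx_def
  have hx_eq : x = π * (n:ℝ)^(1-2*α)/8 := by
    have e2 : (n:ℝ)^(1 - 2*α) = (n:ℝ) * ((n:ℝ)^(-α) * (n:ℝ)^(-α)) := by
      rw [show (1 - 2*α) = 1 + (-α + -α) by ring, Real.rpow_add hn0, Real.rpow_one,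
        Real.rpow_add hn0]
    calc x = π * ((n:ℝ) * ((n:ℝ)^(-α) * (n:ℝ)^(-α))) / 8 := by
          rw [hx_def, hε_def]; ring
    _ = π * (n:ℝ)^(1-2*α)/8 := by rw [e2]
  have hn2α_pos : (0:ℝ) < (n:ℝ)^(1-2*α) := Real.rpow_pos_of_pos hn0 _
  have hxpos : 0 < x := by rw [hx_eq]; positivity
  have htail : Real.exp (-x) ≤ (k/x)^k := aux_exp_neg_rpow hxpos hk0
  have hkx : k / x = 16/(π*(1-2*α)) * ((n:ℝ)^(1-2*α))⁻¹ := by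
    rw [hx_eq, hk_def]
    field_simp
    ring
  have h7 : ((n:ℝ)^(1-2*α))⁻¹ = (n:ℝ)^(-(1-2*α)) := by
    rw [Real.rpow_neg hn0.le]
  have h8 : (k/x)^k = (16/(π*(1-2*α)))^k * (n:ℝ)^(-(1-2*α)*k) := by
    rw [hkx, h7, Real.mul_rpow (by positivity) (by positivity), ← Real.rpow_mul hn0.le]
  have hexp_eq : -(1-2*α)*k = -2 := by
    rw [hk_def]
    field_simp
  have h9 : (k/x)^k = (16/(π*(1-2*α)))^k * (n:ℝ)^(-2:ℝ) := by rw [h8, hexp_eq]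
  set E₁ : ℝ := (16 / (π ^ 2 * (1 - 2 * α))) ^ k with hE₁_def
  have hE₁0 : 0 ≤ E₁ := by positivity
  have hE₀E₁ : (16/(π*(1-2*α)))^k ≤ E₁ := by
    rw [hE₁_def]
    apply Real.rpow_le_rpow (by positivity) _ hk0.le
    apply div_le_div_of_nonneg_left (by norm_num) (by positivity)
    have hpp : π^2 ≤ π := by linarith only [mul_le_mul_of_nonneg_left hπ1.le hπ0.le, sq π]
    exact mul_le_mul_of_nonneg_right hpp h2α.le
  have hnn : (n:ℝ) * (n:ℝ)^(-2:ℝ) = (n:ℝ)^(-1:ℝ) := by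
    rw [show (-1:ℝ) = 1 + (-2) by norm_num, Real.rpow_add hn0, Real.rpow_one]
  have hn1α : (n:ℝ)^(-1:ℝ) ≤ (n:ℝ)^(-α) := by
    apply Real.rpow_le_rpow_of_exponent_le hn1
    linarith
  -- tail chain
  have htail2 : (μ bad).toReal * n ≤ 2 * E₁ * (n:ℝ)^(-α) / π := by
    have s1 : (μ bad).toReal * n ≤ Real.exp (-x) * n := by
      exact mul_le_mul_of_nonneg_right hbadchern hn0.le
    have s2 : Real.exp (-x) * n ≤ (16/(π*(1-2*α)))^k * ((n:ℝ)^(-2:ℝ) * n) := by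
      rw [← mul_assoc]
      apply mul_le_mul_of_nonneg_right _ hn0.le
      rw [← h9]
      exact htail
    have s3 : (16/(π*(1-2*α)))^k * ((n:ℝ)^(-2:ℝ) * n) ≤ E₁ * (n:ℝ)^(-α) := by
      rw [mul_comm ((n:ℝ)^(-2:ℝ)) (n:ℝ), hnn]
      apply mul_le_mul hE₀E₁ hn1α (by positivity) hE₁0
    have s4 : E₁ * (n:ℝ)^(-α) ≤ 2 * E₁ * (n:ℝ)^(-α) / π := by
      have h2π : (1:ℝ) ≤ 2/π := by rw [le_div_iff₀ hπ0]; linarith only [hπ1]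
      calc E₁ * (n:ℝ)^(-α) = E₁ * (n:ℝ)^(-α) * 1 := by ring
      _ ≤ E₁ * (n:ℝ)^(-α) * (2/π) :=
          mul_le_mul_of_nonneg_left h2π (mul_nonneg hE₁0 hna_pos.le)
      _ = 2 * E₁ * (n:ℝ)^(-α) / π := by ring
    linarith only [s1, s2, s3, s4]
  -- assemble
  have hfinal : c₁ + 2 * E₁ * (n:ℝ)^(-α) / π = (1 + (1 + 2 * E₁) * (n:ℝ)^(-α)) / π := by
    rw [hc₁_def]
    field_simp
    ring
  calc ∫ ω, g ω ∂μ ≤ c₁ + (μ bad).toReal * n := by rw [← hIndVal]; exact hmono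
  _ ≤ c₁ + 2 * E₁ * (n:ℝ)^(-α) / π := by linarith only [htail2]
  _ = (1 + (1 + 2 * E₁) * (n:ℝ)^(-α)) / π := hfinal
end

section
/- Comparison of the Horvitz–Thompson and difference-in-means asymptotic variances (appendix variance-inequality Lemma). With V_HT and V_DM,∞ as defined in the context, V_DM,∞ = V_HT − (√((1 − π)/π) · E[Y^{(1)}] + √(π/(1 − π)) · E[Y^{(0)}])²; in particular V_DM,∞ ≤ V_HT. -/
open MeasureTheory ProbabilityTheory

/-- **Comparison of the Horvitz–Thompson and difference-in-means asymptotic variances**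
(appendix variance-inequality Lemma): with
`V_HT = E[(Y⁽¹⁾)²]/π + E[(Y⁽⁰⁾)²]/(1 − π) − (E[Y⁽¹⁾ − Y⁽⁰⁾])²` and
`V_DM,∞ = Var[Y⁽¹⁾]/π + Var[Y⁽⁰⁾]/(1 − π)`, one has
`V_DM,∞ = V_HT − (√((1 − π)/π) E[Y⁽¹⁾] + √(π/(1 − π)) E[Y⁽⁰⁾])²`;
in particular `V_DM,∞ ≤ V_HT`. -/
theorem dm_variance_le_ht_variance
    {Ω : Type*} [MeasurableSpace Ω] (μ : Measure Ω) [IsProbabilityMeasure μ]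
    (Y1 Y0 : Ω → ℝ) (hY1 : MemLp Y1 2 μ) (hY0 : MemLp Y0 2 μ)
    (π : ℝ) (hπ0 : 0 < π) (hπ1 : π < 1) :
    variance Y1 μ / π + variance Y0 μ / (1 - π)
        = ((∫ ω, (Y1 ω) ^ 2 ∂μ) / π + (∫ ω, (Y0 ω) ^ 2 ∂μ) / (1 - π)
            - (∫ ω, Y1 ω - Y0 ω ∂μ) ^ 2)
          - (Real.sqrt ((1 - π) / π) * (∫ ω, Y1 ω ∂μ)
              + Real.sqrt (π / (1 - π)) * (∫ ω, Y0 ω ∂μ)) ^ 2 ∧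
    variance Y1 μ / π + variance Y0 μ / (1 - π)
        ≤ (∫ ω, (Y1 ω) ^ 2 ∂μ) / π + (∫ ω, (Y0 ω) ^ 2 ∂μ) / (1 - π)
            - (∫ ω, Y1 ω - Y0 ω ∂μ) ^ 2 := by
  have hπ1' : 0 < 1 - π := by linarith
  have hi1 : Integrable Y1 μ := hY1.integrable (by norm_num)
  have hi0 : Integrable Y0 μ := hY0.integrable (by norm_num)
  have hsub : (∫ ω, Y1 ω - Y0 ω ∂μ) = (∫ ω, Y1 ω ∂μ) - (∫ ω, Y0 ω ∂μ) :=
    integral_sub hi1 hi0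
  have hv1 : variance Y1 μ = (∫ ω, (Y1 ω) ^ 2 ∂μ) - (∫ ω, Y1 ω ∂μ) ^ 2 := by
    simpa [Pi.pow_apply] using variance_eq_sub hY1
  have hv0 : variance Y0 μ = (∫ ω, (Y0 ω) ^ 2 ∂μ) - (∫ ω, Y0 ω ∂μ) ^ 2 := by
    simpa [Pi.pow_apply] using variance_eq_sub hY0
  set m1 := ∫ ω, Y1 ω ∂μ
  set m0 := ∫ ω, Y0 ω ∂μ
  have ha : Real.sqrt ((1 - π) / π) ^ 2 = (1 - π) / π :=
    Real.sq_sqrt (by positivity)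
  have hb : Real.sqrt (π / (1 - π)) ^ 2 = π / (1 - π) :=
    Real.sq_sqrt (by positivity)
  have hab : Real.sqrt ((1 - π) / π) * Real.sqrt (π / (1 - π)) = 1 := by
    rw [← Real.sqrt_mul (by positivity)]
    rw [show (1 - π) / π * (π / (1 - π)) = 1 by field_simp]
    exact Real.sqrt_one
  have key : (Real.sqrt ((1 - π) / π) * m1 + Real.sqrt (π / (1 - π)) * m0) ^ 2
      = m1 ^ 2 / π + m0 ^ 2 / (1 - π) - (m1 - m0) ^ 2 := by
    have expand : (Real.sqrt ((1 - π) / π) * m1 + Real.sqrt (π / (1 - π)) * m0) ^ 2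
        = Real.sqrt ((1 - π) / π) ^ 2 * m1 ^ 2 + Real.sqrt (π / (1 - π)) ^ 2 * m0 ^ 2
          + 2 * (Real.sqrt ((1 - π) / π) * Real.sqrt (π / (1 - π))) * (m1 * m0) := by
      ring
    rw [expand, ha, hb, hab]
    field_simp
    ring
  constructor
  · rw [hv1, hv0, hsub, key]; ring
  · rw [hv1, hv0, hsub]
    have := sq_nonneg (Real.sqrt ((1 - π) / π) * m1 + Real.sqrt (π / (1 - π)) * m0)
    rw [key] at this
    rw [sub_div, sub_div]
    linarith
end

section
/- Convergence of the truncated inverse binomial proportion (intermediate result proved, via Chernoff's inequality, in the proof of Corollary 1). lim_{n→∞} E[1{Z_n > 0} · n/Z_n] = 1/p. -/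
open MeasureTheory ProbabilityTheory Filter

/-- **Convergence of the truncated inverse binomial proportion** (intermediate result in the
proof of Corollary 1): if `Z_n = Σ_{i<n} A_i` with `A_i` i.i.d. Bernoulli(`p`), `p ∈ (0,1]`
(so that `Z_n` is binomial with parameters `n` and `p`), then
`E[1{Z_n > 0} · n/Z_n] → 1/p` as `n → ∞`. -/
theorem truncated_inverse_binomial_tendsto
    {Ω : Type*} [MeasurableSpace Ω] (μ : Measure Ω) [IsProbabilityMeasure μ]
    (A : ℕ → Ω → ℝ) (p : ℝ) (hp0 : 0 < p) (hp1 : p ≤ 1)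
    (measA : ∀ i, Measurable (A i))
    (A01 : ∀ i ω, A i ω = 0 ∨ A i ω = 1)
    (indep : iIndepFun (β := fun _ => ℝ) A μ)
    (pA : ∀ i, μ {ω | A i ω = 1} = ENNReal.ofReal p) :
    Tendsto (fun n : ℕ =>
        ∫ ω, (if 0 < (∑ i ∈ Finset.range n, A i ω)
          then (n : ℝ) / (∑ i ∈ Finset.range n, A i ω) else 0) ∂μ)
      atTop (nhds (1 / p)) := by
  classical
  set S : ℕ → Ω → ℝ := fun n ω => ∑ i ∈ Finset.range n, A i ω with hSdef
  have hA0 : ∀ i ω, 0 ≤ A i ω := fun i ω => by rcases A01 i ω with h | h <;> simp [h]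
  have hA1 : ∀ i ω, A i ω ≤ 1 := fun i ω => by rcases A01 i ω with h | h <;> simp [h]
  have measS : ∀ n, Measurable (S n) := fun n =>
    Finset.measurable_sum _ fun i _ => measA i
  have hS0 : ∀ n ω, 0 ≤ S n ω := fun n ω => Finset.sum_nonneg fun i _ => hA0 i ω
  -- the sum is integer valued, hence positive values are ≥ 1
  have hSnat : ∀ n ω, ∃ k : ℕ, S n ω = k := by
    intro n ω
    induction n with
    | zero => exact ⟨0, by simp [hSdef]⟩
    | succ m ih =>
      obtain ⟨k, hk⟩ := ih
      rcases A01 m ω with h | h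
      · exact ⟨k, by simp [hSdef, Finset.sum_range_succ, ← hk, h]⟩
      · exact ⟨k + 1, by push_cast; simp [hSdef, Finset.sum_range_succ, ← hk, h]⟩
  have hSone : ∀ n ω, 0 < S n ω → 1 ≤ S n ω := by
    intro n ω hpos
    obtain ⟨k, hk⟩ := hSnat n ω
    rw [hk] at hpos ⊢
    exact_mod_cast Nat.one_le_iff_ne_zero.mpr (by exact_mod_cast hpos.ne')
  have intA : ∀ i, Integrable (A i) μ := fun i =>
    (integrable_const (1 : ℝ)).mono' (measA i).aestronglyMeasurable
      (ae_of_all _ fun ω => by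
        rw [Real.norm_eq_abs, abs_of_nonneg (hA0 i ω)]; exact hA1 i ω)
  have hmeas1 : ∀ i, MeasurableSet {ω | A i ω = 1} := fun i =>
    measA i (measurableSet_singleton 1)
  have EA : ∀ i, ∫ ω, A i ω ∂μ = p := by
    intro i
    have hfun : (fun ω => A i ω) = Set.indicator {ω | A i ω = 1} 1 := by
      funext ω
      rcases A01 i ω with h | h
      · simp [Set.indicator, h]
      · simp [Set.indicator, h]
    rw [hfun, integral_indicator_one (hmeas1 i), measureReal_def, pA i, ENNReal.toReal_ofReal hp0.le]
  -- moment generating function of each A i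
  have mgfA : ∀ i t, mgf (A i) μ t = 1 + (Real.exp t - 1) * p := by
    intro i t
    have hfun : ∀ ω, Real.exp (t * A i ω) = 1 + (Real.exp t - 1) * A i ω := by
      intro ω
      rcases A01 i ω with h | h <;> simp [h]
    unfold mgf
    calc ∫ ω, Real.exp (t * A i ω) ∂μ
        = ∫ ω, (1 + (Real.exp t - 1) * A i ω) ∂μ := by
          exact integral_congr_ae (ae_of_all _ fun ω => hfun ω)
      _ = 1 + (Real.exp t - 1) * p := by
          rw [integral_add (integrable_const _) ((intA i).const_mul _),
            integral_const, integral_const_mul, EA i]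
          simp
  -- Chernoff constants
  set q : ℝ := 1 + (Real.exp (-1) - 1) * p with hqdef
  have hq0 : 0 < q := by nlinarith [Real.exp_pos (-1 : ℝ)]
  set r : ℝ := Real.exp (p / 2) * q with hrdef
  have hr0 : 0 ≤ r := mul_nonneg (Real.exp_pos _).le hq0.le
  have hexpneg : Real.exp (-1 : ℝ) < 1 / 2 := by
    have h := Real.exp_one_gt_d9
    have hx : Real.exp (-1 : ℝ) * Real.exp 1 = 1 := by
      rw [← Real.exp_add]; norm_num
    nlinarith [Real.exp_pos (-1 : ℝ)]
  have hr1 : r < 1 := by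
    have h1 : q ≤ Real.exp ((Real.exp (-1) - 1) * p) := by
      have := Real.add_one_le_exp ((Real.exp (-1) - 1) * p)
      rw [hqdef]; linarith
    have h2 : r ≤ Real.exp (p / 2 + (Real.exp (-1) - 1) * p) := by
      rw [hrdef, Real.exp_add]
      exact mul_le_mul_of_nonneg_left h1 (Real.exp_pos _).le
    have h3 : Real.exp (p / 2 + (Real.exp (-1) - 1) * p) < 1 := by
      rw [Real.exp_lt_one_iff]
      nlinarith
    linarith
  -- Chernoff bound
  have chern : ∀ n : ℕ, (μ {ω | S n ω ≤ (n : ℝ) * p / 2}).toReal ≤ r ^ n := by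
    intro n
    have hint : Integrable (fun ω => Real.exp ((-1 : ℝ) * S n ω)) μ :=
      (integrable_const (1 : ℝ)).mono'
        (((measS n).const_mul _).exp).aestronglyMeasurable
        (ae_of_all _ fun ω => by
          rw [Real.norm_eq_abs, abs_of_nonneg (Real.exp_pos _).le]
          rw [show (-1 : ℝ) * S n ω = -(S n ω) by ring]
          rw [← Real.exp_zero]
          exact Real.exp_le_exp.mpr (by linarith [hS0 n ω]))
    have h := measure_le_le_exp_mul_mgf (X := S n) (μ := μ) (t := -1)
      ((n : ℝ) * p / 2) (by norm_num) hint
    have hmgf : mgf (S n) μ (-1) = q ^ n := by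
      have hsum : S n = ∑ i ∈ Finset.range n, A i := by
        funext ω; simp [hSdef]
      rw [hsum, indep.mgf_sum measA (Finset.range n)]
      simp [mgfA, hqdef]
    rw [hmgf] at h
    calc (μ {ω | S n ω ≤ (n : ℝ) * p / 2}).toReal
        ≤ Real.exp (-(-1) * ((n : ℝ) * p / 2)) * q ^ n := h
      _ = r ^ n := by
          rw [show -(-1 : ℝ) * ((n : ℝ) * p / 2) = (n : ℝ) * (p / 2) by ring,
            Real.exp_nat_mul, hrdef, mul_pow]
  -- identical distribution
  have key : ∀ i (s : Set ℝ), MeasurableSet s → μ (A i ⁻¹' s) =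
      (if (1 : ℝ) ∈ s then ENNReal.ofReal p else 0)
        + (if (0 : ℝ) ∈ s then 1 - ENNReal.ofReal p else 0) := by
    intro i s _
    have hcompl : {ω | A i ω = 0} = {ω | A i ω = 1}ᶜ := by
      ext ω
      simp only [Set.mem_compl_iff, Set.mem_setOf_eq]
      rcases A01 i ω with h | h <;> simp [h]
    have hple : ENNReal.ofReal p ≤ 1 := by
      rw [← ENNReal.ofReal_one]
      exact ENNReal.ofReal_le_ofReal hp1
    have h0m : μ {ω | A i ω = 0} = 1 - ENNReal.ofReal p := by
      rw [hcompl, prob_compl_eq_one_sub (hmeas1 i), pA i]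
    by_cases h1 : (1 : ℝ) ∈ s <;> by_cases h0 : (0 : ℝ) ∈ s
    · have hpre : A i ⁻¹' s = Set.univ :=
        Set.eq_univ_of_forall fun ω => by
          rcases A01 i ω with h | h <;> simp [Set.mem_preimage, h, h0, h1]
      rw [hpre, measure_univ]
      simp only [h0, h1, if_true]
      exact (add_tsub_cancel_of_le hple).symm
    · have hpre : A i ⁻¹' s = {ω | A i ω = 1} := by
        ext ω
        rcases A01 i ω with h | h <;> simp [Set.mem_preimage, h, h0, h1]
      rw [hpre, pA i]
      simp [h0, h1]
    · have hpre : A i ⁻¹' s = {ω | A i ω = 0} := by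
        ext ω
        rcases A01 i ω with h | h <;> simp [Set.mem_preimage, h, h0, h1]
      rw [hpre, h0m]
      simp [h0, h1]
    · have hpre : A i ⁻¹' s = ∅ := by
        ext ω
        rcases A01 i ω with h | h <;> simp [Set.mem_preimage, h, h0, h1]
      rw [hpre]
      simp [h0, h1]
  have ident : ∀ i, IdentDistrib (A i) (A 0) μ μ := by
    intro i
    refine ⟨(measA i).aemeasurable, (measA 0).aemeasurable, ?_⟩
    ext s hs
    rw [Measure.map_apply (measA i) hs, Measure.map_apply (measA 0) hs,
      key i s hs, key 0 s hs]
  -- strong law of large numbers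
  have slln : ∀ᵐ ω ∂μ, Tendsto (fun n => S n ω / n) atTop (nhds p) := by
    have h := strong_law_ae_real A (intA 0)
      (fun i j hij => indep.indepFun hij) ident
    rw [EA 0] at h
    exact h
  -- decomposition
  set G : ℕ → Ω → ℝ := fun n ω =>
    if (n : ℝ) * p / 2 ≤ S n ω ∧ 0 < S n ω then (n : ℝ) / S n ω else 0 with hGdef
  set H : ℕ → Ω → ℝ := fun n ω =>
    if 0 < S n ω ∧ S n ω < (n : ℝ) * p / 2 then (n : ℝ) / S n ω else 0 with hHdef
  have decomp : ∀ n ω,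
      (if 0 < S n ω then (n : ℝ) / S n ω else 0) = G n ω + H n ω := by
    intro n ω
    by_cases hpos : 0 < S n ω
    · by_cases hge : (n : ℝ) * p / 2 ≤ S n ω
      · simp [hGdef, hHdef, hpos, hge, not_lt.mpr hge]
      · simp [hGdef, hHdef, hpos, hge, lt_of_not_ge hge]
    · simp [hGdef, hHdef, hpos]
  have measG : ∀ n, Measurable (G n) := fun n =>
    Measurable.ite
      ((measurableSet_le measurable_const (measS n)).inter
        (measurableSet_lt measurable_const (measS n)))
      (measurable_const.div (measS n)) measurable_const
  have measH : ∀ n, Measurable (H n) := fun n =>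
    Measurable.ite
      ((measurableSet_lt measurable_const (measS n)).inter
        (measurableSet_lt (measS n) measurable_const))
      (measurable_const.div (measS n)) measurable_const
  have Gbound : ∀ n ω, ‖G n ω‖ ≤ 2 / p := by
    intro n ω
    simp only [hGdef]
    by_cases hc : (n : ℝ) * p / 2 ≤ S n ω ∧ 0 < S n ω
    · rw [if_pos hc, Real.norm_eq_abs,
        abs_of_nonneg (div_nonneg (Nat.cast_nonneg n) hc.2.le)]
      rw [div_le_div_iff₀ hc.2 hp0]
      nlinarith [hc.1, hc.2]
    · rw [if_neg hc]
      rw [norm_zero]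
      positivity
  have intG : ∀ n, Integrable (G n) μ := fun n =>
    (integrable_const (2 / p)).mono' (measG n).aestronglyMeasurable
      (ae_of_all _ (Gbound n))
  have Hnonneg : ∀ n ω, 0 ≤ H n ω := by
    intro n ω
    simp only [hHdef]
    by_cases hc : 0 < S n ω ∧ S n ω < (n : ℝ) * p / 2
    · rw [if_pos hc]; exact div_nonneg (Nat.cast_nonneg n) hc.1.le
    · rw [if_neg hc]
  have Hbound : ∀ n ω, H n ω ≤
      Set.indicator {ω | S n ω ≤ (n : ℝ) * p / 2} (fun _ => (n : ℝ)) ω := by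
    intro n ω
    simp only [hHdef]
    by_cases hc : 0 < S n ω ∧ S n ω < (n : ℝ) * p / 2
    · rw [if_pos hc, Set.indicator_of_mem (by exact hc.2.le)]
      rw [div_le_iff₀ hc.1]
      nlinarith [hSone n ω hc.1, Nat.cast_nonneg (α := ℝ) n]
    · rw [if_neg hc]
      exact Set.indicator_nonneg (fun x _ => Nat.cast_nonneg n) ω
  have intH : ∀ n, Integrable (H n) μ := fun n =>
    (integrable_const ((n : ℝ))).mono' (measH n).aestronglyMeasurable
      (ae_of_all _ fun ω => by
        rw [Real.norm_eq_abs, abs_of_nonneg (Hnonneg n ω)]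
        exact (Hbound n ω).trans (by
          by_cases hm : ω ∈ {ω | S n ω ≤ (n : ℝ) * p / 2}
          · rw [Set.indicator_of_mem hm]
          · rw [Set.indicator_of_notMem hm]; exact Nat.cast_nonneg n))
  -- convergence of ∫ G n
  have tendG : Tendsto (fun n => ∫ ω, G n ω ∂μ) atTop (nhds (1 / p)) := by
    have h := tendsto_integral_of_dominated_convergence (μ := μ)
      (F := fun n ω => G n ω) (f := fun _ => 1 / p) (bound := fun _ => 2 / p)
      (fun n => (measG n).aestronglyMeasurable)
      (integrable_const _)
      (fun n => ae_of_all _ (Gbound n))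
      ?_
    · rw [integral_const] at h
      simpa using h
    · filter_upwards [slln] with ω hω
      have h1 : ∀ᶠ n : ℕ in atTop, p / 2 < S n ω / n :=
        hω.eventually (eventually_gt_nhds (by linarith))
      have h2 : ∀ᶠ n : ℕ in atTop, 1 ≤ n := eventually_ge_atTop 1
      have heq : ∀ᶠ n : ℕ in atTop, G n ω = (S n ω / n)⁻¹ := by
        filter_upwards [h1, h2] with n hn1 hn2
        have hnpos : (0 : ℝ) < n := by exact_mod_cast hn2
        have hgt : (n : ℝ) * p / 2 < S n ω := by
          rw [lt_div_iff₀ hnpos] at hn1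
          linarith [hn1]
        have hSpos : 0 < S n ω := lt_of_le_of_lt (by positivity) hgt
        simp only [hGdef]
        rw [if_pos ⟨hgt.le, hSpos⟩, inv_div]
      have hlim : Tendsto (fun n : ℕ => (S n ω / n)⁻¹) atTop (nhds p⁻¹) :=
        hω.inv₀ hp0.ne'
      rw [show (1 : ℝ) / p = p⁻¹ by rw [one_div]]
      have heq' : (fun n : ℕ => (S n ω / n)⁻¹) =ᶠ[atTop] fun n => G n ω := by
        filter_upwards [heq] with n h
        exact h.symm
      exact hlim.congr' heq'
  -- convergence of ∫ H n to 0
  have tendH : Tendsto (fun n => ∫ ω, H n ω ∂μ) atTop (nhds 0) := by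
    refine squeeze_zero (fun n => integral_nonneg (Hnonneg n)) (fun n => ?_)
      (tendsto_self_mul_const_pow_of_lt_one hr0 hr1)
    have hmb : MeasurableSet {ω | S n ω ≤ (n : ℝ) * p / 2} :=
      measurableSet_le (measS n) measurable_const
    calc ∫ ω, H n ω ∂μ
        ≤ ∫ ω, Set.indicator {ω | S n ω ≤ (n : ℝ) * p / 2}
            (fun _ => (n : ℝ)) ω ∂μ :=
          integral_mono (intH n)
            ((integrable_const ((n : ℝ))).indicator hmb)
            (Hbound n)
      _ = (μ {ω | S n ω ≤ (n : ℝ) * p / 2}).toReal * n := by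
          rw [integral_indicator_const ((n : ℝ)) hmb, smul_eq_mul, measureReal_def]
      _ ≤ (n : ℝ) * r ^ n := by
          rw [mul_comm]
          exact mul_le_mul_of_nonneg_left (chern n) (Nat.cast_nonneg n)
  -- conclusion
  have final : ∀ n, (∫ ω, (if 0 < S n ω then (n : ℝ) / S n ω else 0) ∂μ)
      = (∫ ω, G n ω ∂μ) + ∫ ω, H n ω ∂μ := by
    intro n
    rw [← integral_add (intG n) (intH n)]
    exact integral_congr_ae (ae_of_all _ fun ω => decomp n ω)
  have := tendG.add tendH
  rw [add_zero] at this
  exact this.congr (fun n => (final n).symm)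
end
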